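/- For D ∈ L(K,H) with ‖D‖ = 1 and s, t ∈ ℝ, one has M_{-Th(sD)}(Th(tD)) = Th((t-s)D). Consequently, ρ(Th(sD), Th(tD)) = |t-s| where ρ(A,B) = tanh^{-1}‖M_{-A}(B)‖, so the curve t ↦ Th(tD) is a metric line in (B, ρ). -/

import Mathlib

open ContinuousLinearMap

variable {K H : Type*}
  [NormedAddCommGroup H] [InnerProductSpace ℂ H] [CompleteSpace H]
  [NormedAddCommGroup K] [InnerProductSpace ℂ K] [CompleteSpace K]

/-- The square root of a (positive) operator, via continuous functional calculus. -/
noncomputable def opSqrt {E : Type*} [NormedAddCommGroup E] [InnerProductSpace ℂ E]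
    [CompleteSpace E] (T : E →L[ℂ] E) : E →L[ℂ] E := cfc Real.sqrt T

/-- The inverse square root of a (positive invertible) operator. -/
noncomputable def opInvSqrt {E : Type*} [NormedAddCommGroup E] [InnerProductSpace ℂ E]
    [CompleteSpace E] (T : E →L[ℂ] E) : E →L[ℂ] E := cfc (fun x : ℝ => (Real.sqrt x)⁻¹) T

/-- The absolute value |D| = (D*D)^{1/2} of an operator D : K → H. -/
noncomputable def absOp (D : K →L[ℂ] H) : K →L[ℂ] K := opSqrt (adjoint D ∘L D)

/-- The Möbius transformation M_A(X) = (1-AA*)^{-1/2}(A+X)(1+A*X)^{-1}(1-A*A)^{1/2}. -/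
noncomputable def mobius (A X : K →L[ℂ] H) : K →L[ℂ] H :=
  opInvSqrt (1 - A ∘L adjoint A) ∘L (A + X) ∘L
    Ring.inverse (1 + adjoint A ∘L X) ∘L opSqrt (1 - adjoint A ∘L A)

/-- Inverse hyperbolic tangent. -/
noncomputable def artanh (x : ℝ) : ℝ := Real.log ((1 + x) / (1 - x)) / 2


open ContinuousLinearMap

namespace ThOpAux


lemma tanh_lt_one (x : ℝ) : Real.tanh x < 1 := by
  rw [Real.tanh_eq_sinh_div_cosh, div_lt_one (Real.cosh_pos x)]
  nlinarith [Real.cosh_sub_sinh x, Real.exp_pos (-x)]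

lemma neg_one_lt_tanh (x : ℝ) : -1 < Real.tanh x := by
  rw [Real.tanh_eq_sinh_div_cosh, lt_div_iff₀ (Real.cosh_pos x)]
  nlinarith [Real.cosh_add_sinh x, Real.exp_pos x]

lemma abs_tanh_lt_one (x : ℝ) : |Real.tanh x| < 1 :=
  abs_lt.mpr ⟨neg_one_lt_tanh x, tanh_lt_one x⟩

lemma tanh_nonneg {x : ℝ} (hx : 0 ≤ x) : 0 ≤ Real.tanh x := by
  rw [Real.tanh_eq_sinh_div_cosh]
  exact div_nonneg (Real.sinh_nonneg_iff.mpr hx) (Real.cosh_pos x).le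

lemma tanh_pos {x : ℝ} (hx : 0 < x) : 0 < Real.tanh x := by
  rw [Real.tanh_eq_sinh_div_cosh]
  exact div_pos (Real.sinh_pos_iff.mpr hx) (Real.cosh_pos x)

lemma one_sub_tanh_mul_tanh_pos (a b : ℝ) : 0 < 1 - Real.tanh a * Real.tanh b := by
  nlinarith [tanh_lt_one a, tanh_lt_one b, neg_one_lt_tanh a, neg_one_lt_tanh b]

lemma tanh_sub (a b : ℝ) :
    Real.tanh (a - b) = (Real.tanh a - Real.tanh b) / (1 - Real.tanh a * Real.tanh b) := by
  have hca := (Real.cosh_pos a).ne'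
  have hcb := (Real.cosh_pos b).ne'
  have hcab : Real.cosh a * Real.cosh b - Real.sinh a * Real.sinh b ≠ 0 := by
    rw [← Real.cosh_sub]; exact (Real.cosh_pos _).ne'
  rw [Real.tanh_eq_sinh_div_cosh, Real.tanh_eq_sinh_div_cosh, Real.tanh_eq_sinh_div_cosh,
    Real.sinh_sub, Real.cosh_sub]
  field_simp

lemma tanh_mono {a b : ℝ} (hab : a ≤ b) : Real.tanh a ≤ Real.tanh b := by
  have h1 : 0 ≤ Real.tanh (b - a) := tanh_nonneg (by linarith)
  have h2 := one_sub_tanh_mul_tanh_pos b a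
  have h3 := tanh_sub b a
  have h4 : Real.tanh b - Real.tanh a
      = Real.tanh (b - a) * (1 - Real.tanh b * Real.tanh a) := by
    field_simp at h3; linarith [h3]
  nlinarith [mul_nonneg h1 h2.le]

lemma abs_tanh_eq (y : ℝ) : |Real.tanh y| = Real.tanh |y| := by
  rcases le_or_gt 0 y with h | h
  · rw [abs_of_nonneg (tanh_nonneg h), abs_of_nonneg h]
  · have : Real.tanh y < 0 := by
      have := tanh_pos (neg_pos.mpr h); rw [Real.tanh_neg] at this; linarith
    rw [abs_of_neg this, abs_of_neg h, Real.tanh_neg]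

lemma artanh_tanh (u : ℝ) :
    Real.log ((1 + Real.tanh u) / (1 - Real.tanh u)) / 2 = u := by
  have hc := (Real.cosh_pos u).ne'
  have h1 : 1 + Real.tanh u = Real.exp u / Real.cosh u := by
    rw [Real.tanh_eq_sinh_div_cosh, ← Real.cosh_add_sinh]; field_simp
  have h2 : 1 - Real.tanh u = Real.exp (-u) / Real.cosh u := by
    rw [Real.tanh_eq_sinh_div_cosh, ← Real.cosh_sub_sinh]; field_simp
  rw [h1, h2, div_div_div_cancel_right₀ hc, ← Real.exp_sub, Real.log_exp]
  ring

lemma abs_tanh_mul_le (s x : ℝ) (hx : x ∈ Set.Icc (0:ℝ) 1) :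
    |Real.tanh (s * x)| ≤ Real.tanh |s| := by
  rw [abs_tanh_eq, abs_mul]
  exact tanh_mono (by nlinarith [abs_nonneg s, hx.1, hx.2, abs_of_nonneg hx.1])


section Ops



variable {E F : Type*}
  [NormedAddCommGroup E] [InnerProductSpace ℂ E] [CompleteSpace E]
  [NormedAddCommGroup F] [InnerProductSpace ℂ F] [CompleteSpace F]

lemma pow_intertwine (S : F →L[ℂ] F) (T : E →L[ℂ] E) (V : E →L[ℂ] F)
    (h : S ∘L V = V ∘L T) (n : ℕ) : (S ^ n) ∘L V = V ∘L (T ^ n) := by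
  induction n with
  | zero => simp [one_def]
  | succ n ih =>
    rw [pow_succ, pow_succ, mul_def, mul_def, comp_assoc, h, ← comp_assoc, ih, comp_assoc]

lemma aeval_intertwine (S : F →L[ℂ] F) (T : E →L[ℂ] E) (V : E →L[ℂ] F)
    (h : S ∘L V = V ∘L T) (q : Polynomial ℝ) :
    (Polynomial.aeval S q) ∘L V = V ∘L (Polynomial.aeval T q) := by
  induction q using Polynomial.induction_on' with
  | add p q hp hq => rw [map_add, map_add, add_comp, comp_add, hp, hq]
  | monomial n r =>
    rw [Polynomial.aeval_monomial, Polynomial.aeval_monomial,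
      Algebra.algebraMap_eq_smul_one, Algebra.algebraMap_eq_smul_one,
      smul_one_mul, smul_one_mul, smul_comp, comp_smul, pow_intertwine S T V h n]

lemma cfc_intertwine [Nontrivial E] [Nontrivial F]
    (S : F →L[ℂ] F) (T : E →L[ℂ] E) (V : E →L[ℂ] F)
    (hS : IsSelfAdjoint S) (hT : IsSelfAdjoint T) (h : S ∘L V = V ∘L T)
    {g : ℝ → ℝ} (hg : Continuous g) :
    (cfc g S) ∘L V = V ∘L (cfc g T) := by
  set M : ℝ := max ‖S‖ ‖T‖ with hM
  have hMS : spectrum ℝ S ⊆ Set.Icc (-M) M := by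
    intro x hx
    have h1 := spectrum.norm_le_norm_of_mem hx
    rw [Real.norm_eq_abs] at h1
    have h2 : |x| ≤ M := le_trans h1 (le_max_left ‖S‖ ‖T‖)
    exact abs_le.mp h2
  have hMT : spectrum ℝ T ⊆ Set.Icc (-M) M := by
    intro x hx
    have h1 := spectrum.norm_le_norm_of_mem hx
    rw [Real.norm_eq_abs] at h1
    have h2 : |x| ≤ M := le_trans h1 (le_max_right ‖S‖ ‖T‖)
    exact abs_le.mp h2
  rw [← sub_eq_zero, ← norm_le_zero_iff]
  refine le_of_forall_pos_le_add fun ε hε => ?_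
  rw [zero_add]
  set δ : ℝ := ε / (2 * (‖V‖ + 1)) with hδdef
  have hδ : 0 < δ := by positivity
  obtain ⟨q, hq⟩ := exists_polynomial_near_of_continuousOn (-M) M g
    hg.continuousOn δ hδ
  have hS1 : ‖cfc g S - cfc (fun x => q.eval x) S‖ ≤ δ := by
    rw [← cfc_sub g (fun x => q.eval x) S hg.continuousOn
      (Polynomial.continuous q).continuousOn]
    refine norm_cfc_le hδ.le fun x hx => ?_
    rw [Real.norm_eq_abs, abs_sub_comm]
    exact (hq x (hMS hx)).le
  have hT1 : ‖cfc g T - cfc (fun x => q.eval x) T‖ ≤ δ := by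
    rw [← cfc_sub g (fun x => q.eval x) T hg.continuousOn
      (Polynomial.continuous q).continuousOn]
    refine norm_cfc_le hδ.le fun x hx => ?_
    rw [Real.norm_eq_abs, abs_sub_comm]
    exact (hq x (hMT hx)).le
  have hqS : cfc (fun x => q.eval x) S = Polynomial.aeval S q := cfc_polynomial q S hS
  have hqT : cfc (fun x => q.eval x) T = Polynomial.aeval T q := cfc_polynomial q T hT
  have key : (cfc g S) ∘L V - V ∘L (cfc g T)
      = (cfc g S - cfc (fun x => q.eval x) S) ∘L V
        - V ∘L (cfc g T - cfc (fun x => q.eval x) T) := by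
    rw [sub_comp, comp_sub, hqS, hqT, aeval_intertwine S T V h q]
    abel
  rw [key]
  have h1 : ‖(cfc g S - cfc (fun x => q.eval x) S) ∘L V‖ ≤ δ * ‖V‖ :=
    (opNorm_comp_le _ _).trans (mul_le_mul_of_nonneg_right hS1 (norm_nonneg _))
  have h2 : ‖V ∘L (cfc g T - cfc (fun x => q.eval x) T)‖ ≤ ‖V‖ * δ :=
    (opNorm_comp_le _ _).trans (mul_le_mul_of_nonneg_left hT1 (norm_nonneg _))
  calc ‖_ - _‖ ≤ δ * ‖V‖ + ‖V‖ * δ := (norm_sub_le _ _).trans (by linarith)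
  _ ≤ ε := by
      have hV : (0:ℝ) ≤ ‖V‖ := norm_nonneg _
      have h3 : δ * ‖V‖ + ‖V‖ * δ = ε * (2 * ‖V‖ / (2 * (‖V‖ + 1))) := by
        rw [hδdef]; ring
      rw [h3]
      have h4 : 2 * ‖V‖ / (2 * (‖V‖ + 1)) ≤ 1 := by
        rw [div_le_one (by positivity)]; linarith
      calc ε * (2 * ‖V‖ / (2 * (‖V‖ + 1))) ≤ ε * 1 := mul_le_mul_of_nonneg_left h4 hε.le
      _ = ε := mul_one ε


end Ops

section Ops2



variable {E F : Type*}
  [NormedAddCommGroup E] [InnerProductSpace ℂ E] [CompleteSpace E]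
  [NormedAddCommGroup F] [InnerProductSpace ℂ F] [CompleteSpace F]

lemma continuous_tanh : Continuous Real.tanh := by
  have : Real.tanh = fun x => Real.sinh x / Real.cosh x := by
    funext x; exact Real.tanh_eq_sinh_div_cosh x
  rw [this]
  exact Real.continuous_sinh.div Real.continuous_cosh fun x => (Real.cosh_pos x).ne'

lemma hasDerivAt_tanh_mul (u : ℝ) : HasDerivAt (fun x : ℝ => Real.tanh (u * x)) u 0 := by
  have h1 : HasDerivAt (fun x : ℝ => u * x) u 0 := by
    simpa using (hasDerivAt_id (0 : ℝ)).const_mul u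
  have hs : HasDerivAt (fun x : ℝ => Real.sinh (u * x)) u 0 := by
    simpa [Function.comp_def] using (Real.hasDerivAt_sinh (u * 0)).comp 0 h1
  have hc : HasDerivAt (fun x : ℝ => Real.cosh (u * x)) 0 0 := by
    simpa [Function.comp_def] using (Real.hasDerivAt_cosh (u * 0)).comp 0 h1
  have hne : Real.cosh (u * 0) ≠ 0 := (Real.cosh_pos _).ne'
  have := hs.div hc hne
  simp only [mul_zero, Real.cosh_zero, Real.sinh_zero] at this
  have heq : (fun x : ℝ => Real.sinh (u * x) / Real.cosh (u * x))
      = fun x : ℝ => Real.tanh (u * x) := by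
    funext x; rw [Real.tanh_eq_sinh_div_cosh]
  rw [Pi.div_def, heq] at this
  simpa using this

lemma exists_tanh_factor (u : ℝ) :
    ∃ r : ℝ → ℝ, Continuous r ∧ ∀ x, Real.tanh (u * x) = x * r x := by
  refine ⟨fun x => if x = 0 then u else Real.tanh (u * x) / x, ?_, ?_⟩
  · rw [continuous_iff_continuousAt]
    intro x
    rcases eq_or_ne x 0 with rfl | hx
    · have hslope := hasDerivAt_iff_tendsto_slope.mp (hasDerivAt_tanh_mul u)
      have hcongr : ∀ y ∈ ({(0:ℝ)}ᶜ : Set ℝ),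
          slope (fun x : ℝ => Real.tanh (u * x)) 0 y
            = (fun x => if x = 0 then u else Real.tanh (u * x) / x) y := by
        intro y hy
        have hy' : y ≠ 0 := hy
        simp [slope_def_field, hy', div_eq_div_iff, sub_zero]
      unfold ContinuousAt
      have h0 : (fun x : ℝ => if x = 0 then u else Real.tanh (u * x) / x) 0 = u := by
        simp
      rw [h0]
      rw [← nhdsNE_sup_pure (0 : ℝ)]
      refine Filter.Tendsto.sup ?_ ?_
      · exact hslope.congr' (Filter.eventuallyEq_of_mem self_mem_nhdsWithin hcongr)
      · simpa [h0] using tendsto_pure_nhds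
          (fun x : ℝ => if x = 0 then u else Real.tanh (u * x) / x) 0
    · have hev : ∀ᶠ y in nhds x, (fun x : ℝ => Real.tanh (u * x) / x) y
          = (fun x => if x = 0 then u else Real.tanh (u * x) / x) y := by
        filter_upwards [isOpen_compl_singleton.mem_nhds hx] with y hy
        simp [show y ≠ 0 from hy]
      have hca : ContinuousAt (fun x : ℝ => Real.tanh (u * x) / x) x :=
        ((continuous_tanh.comp (continuous_const.mul continuous_id)).continuousAt).div
          continuousAt_id hx
      exact hca.congr hev
  · intro x
    rcases eq_or_ne x 0 with rfl | hx
    · simp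
    · simp only [if_neg hx]
      rw [mul_div_cancel₀ _ hx]


lemma absorb (T : E →L[ℂ] E) (J : E →L[ℂ] F) (hT : IsSelfAdjoint T)
    (h : adjoint J ∘L (J ∘L T) = T) (u : ℝ) :
    adjoint J ∘L (J ∘L cfc (fun x => Real.tanh (u * x)) T)
      = cfc (fun x => Real.tanh (u * x)) T := by
  obtain ⟨r, hr, hxr⟩ := exists_tanh_factor u
  have h1 : cfc (fun x => Real.tanh (u * x)) T = T ∘L cfc r T := by
    have he : (fun x : ℝ => Real.tanh (u * x)) = fun x : ℝ => x * r x := funext hxr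
    rw [he]
    rw [cfc_mul (fun x : ℝ => x) r T continuousOn_id hr.continuousOn]
    rw [cfc_id' ℝ T hT, mul_def]
  rw [h1]
  calc adjoint J ∘L (J ∘L (T ∘L cfc r T))
      = (adjoint J ∘L (J ∘L T)) ∘L cfc r T := by rw [comp_assoc, comp_assoc]
  _ = T ∘L cfc r T := by rw [h]

lemma norm_J_comp (C : E →L[ℂ] E) (J : E →L[ℂ] F) (hC : IsSelfAdjoint C)
    (h : adjoint J ∘L (J ∘L C) = C) : ‖J ∘L C‖ = ‖C‖ := by
  have hCadj : adjoint C = C := by rw [← star_eq_adjoint]; exact hC.star_eq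
  have h1 := norm_adjoint_comp_self (J ∘L C)
  have h2 : (adjoint (J ∘L C)) ∘L (J ∘L C) = C ∘L C := by
    rw [adjoint_comp, hCadj, comp_assoc, h]
  have h3 : ‖C ∘L C‖ = ‖C‖ * ‖C‖ := by
    have h4 := norm_adjoint_comp_self C; rwa [hCadj] at h4
  rw [h2, h3] at h1
  exact mul_self_inj (norm_nonneg _) (norm_nonneg _) |>.mp h1 |>.symm


end Ops2

end ThOpAux




open ThOpAux

set_option maxHeartbeats 2000000

/-- M_{-Th(sD)}(Th(tD)) = Th((t-s)D); consequently ρ(Th(sD), Th(tD)) = |t-s| for the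
hyperbolic metric ρ(A,B) = tanh⁻¹‖M_{-A}(B)‖, i.e. t ↦ Th(tD) is a metric line. -/
theorem thOp_is_metric_line (D J : K →L[ℂ] H) (hD : ‖D‖ = 1)
    (hpolar : D = J ∘L absOp D)
    (hJ1 : adjoint J ∘L J ∘L absOp D = absOp D)
    (hJ2 : absOp D ∘L (adjoint J ∘L J) = absOp D) :
    ∀ s t : ℝ,
      mobius (-(J ∘L cfc (fun x : ℝ => Real.tanh (s * x)) (absOp D)))
          (J ∘L cfc (fun x : ℝ => Real.tanh (t * x)) (absOp D))
        = J ∘L cfc (fun x : ℝ => Real.tanh ((t - s) * x)) (absOp D) ∧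
      artanh ‖mobius (-(J ∘L cfc (fun x : ℝ => Real.tanh (s * x)) (absOp D)))
          (J ∘L cfc (fun x : ℝ => Real.tanh (t * x)) (absOp D))‖ = |t - s| := by
  -- Nontriviality
  have hDne : D ≠ 0 := by intro h; rw [h] at hD; simp at hD
  have hKn : Nontrivial K := by
    by_contra hK
    rw [not_nontrivial_iff_subsingleton] at hK
    exact hDne (ContinuousLinearMap.ext fun x => by rw [Subsingleton.elim x 0]; simp)
  have hHn : Nontrivial H := by
    by_contra hH
    rw [not_nontrivial_iff_subsingleton] at hH
    exact hDne (ContinuousLinearMap.ext fun x => Subsingleton.elim _ _)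
  have hKop : Nontrivial (K →L[ℂ] K) := by
    obtain ⟨x, hx⟩ := exists_ne (0 : K)
    exact nontrivial_of_ne 1 0 fun hc => hx (by
      have := congrArg (fun f : K →L[ℂ] K => f x) hc; simpa using this)
  -- Facts about |D|
  have hDDsa : IsSelfAdjoint (adjoint D ∘L D) := by
    rw [IsSelfAdjoint, star_eq_adjoint, adjoint_comp, adjoint_adjoint]
  have hDDpos : (0 : K →L[ℂ] K) ≤ adjoint D ∘L D := by
    rw [nonneg_iff_isPositive]
    refine ⟨hDDsa.isSymmetric, fun x => ?_⟩
    rw [reApplyInnerSelf, comp_apply, adjoint_inner_left]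
    exact inner_self_nonneg
  have hDDnorm : ‖adjoint D ∘L D‖ = 1 := by rw [norm_adjoint_comp_self, hD, one_mul]
  have hTsa : IsSelfAdjoint (absOp D) := cfc_predicate Real.sqrt (adjoint D ∘L D)
  have hspecT : spectrum ℝ (absOp D) = Real.sqrt '' spectrum ℝ (adjoint D ∘L D) := by
    unfold absOp opSqrt
    exact cfc_map_spectrum (R := ℝ) (f := Real.sqrt) (a := adjoint D ∘L D) hDDsa
      Real.continuous_sqrt.continuousOn
  have hspecT01 : spectrum ℝ (absOp D) ⊆ Set.Icc 0 1 := by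
    rw [hspecT]
    rintro - ⟨y, hy, rfl⟩
    have h1 := spectrum.norm_le_norm_of_mem hy
    rw [Real.norm_eq_abs, hDDnorm] at h1
    exact ⟨Real.sqrt_nonneg y, Real.sqrt_le_one.mpr (abs_le.mp h1).2⟩
  have h1T : (1 : ℝ) ∈ spectrum ℝ (absOp D) := by
    rw [hspecT]
    refine ⟨1, ?_, Real.sqrt_one⟩
    have := CStarAlgebra.norm_mem_spectrum_of_nonneg hDDpos
    rwa [hDDnorm] at this
  intro s t
  set T : K →L[ℂ] K := absOp D with hTdef
  -- abbreviations
  set fs : ℝ → ℝ := fun x => Real.tanh (s * x) with hfsdef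
  set ft : ℝ → ℝ := fun x => Real.tanh (t * x) with hftdef
  set fd : ℝ → ℝ := fun x => Real.tanh ((t - s) * x) with hfddef
  have hcont : ∀ u : ℝ, Continuous (fun x : ℝ => Real.tanh (u * x)) := fun u =>
    continuous_tanh.comp (continuous_const.mul continuous_id)
  have hfsc : Continuous fs := hcont s
  have hftc : Continuous ft := hcont t
  have hfdc : Continuous fd := hcont (t - s)
  set cs : K →L[ℂ] K := cfc fs T with hcsdef
  set ct : K →L[ℂ] K := cfc ft T with hctdef
  have hcs_sa : IsSelfAdjoint cs := cfc_predicate fs T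
  have hct_sa : IsSelfAdjoint ct := cfc_predicate ft T
  have habs_s : adjoint J ∘L (J ∘L cs) = cs := absorb T J hTsa hJ1 s
  have habs_t : adjoint J ∘L (J ∘L ct) = ct := absorb T J hTsa hJ1 t
  set A : K →L[ℂ] H := -(J ∘L cs) with hAdef
  set X : K →L[ℂ] H := J ∘L ct with hXdef
  have hcs_adj : adjoint cs = cs := by rw [← star_eq_adjoint]; exact hcs_sa.star_eq
  have hA' : adjoint A = -(cs ∘L adjoint J) := by
    rw [hAdef, map_neg, adjoint_comp, hcs_adj]
  -- adjoint A ∘L X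
  have hcsct : cs ∘L ct = cfc (fun x => fs x * ft x) T := by
    rw [← mul_def, hcsdef, hctdef,
      ← cfc_mul fs ft T hfsc.continuousOn hftc.continuousOn]
  have hAX : adjoint A ∘L X = -(cfc (fun x => fs x * ft x) T) := by
    rw [hA', hXdef, neg_comp, comp_assoc, habs_t, hcsct]
  have hOneAdd : 1 + adjoint A ∘L X = cfc (fun x => 1 - fs x * ft x) T := by
    have he : cfc (fun x => 1 - fs x * ft x) T
        = 1 - cfc (fun x => fs x * ft x) T := by
      rw [cfc_sub (fun _ => (1:ℝ)) (fun x => fs x * ft x) T continuousOn_const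
        (hfsc.mul hftc).continuousOn, cfc_const 1 T hTsa, map_one]
    rw [hAX, he]
    abel
  have hw_pos : ∀ x : ℝ, 0 < 1 - fs x * ft x := fun x =>
    one_sub_tanh_mul_tanh_pos (s * x) (t * x)
  have hRinv : Ring.inverse (1 + adjoint A ∘L X)
      = cfc (fun x => (1 - fs x * ft x)⁻¹) T := by
    rw [hOneAdd]
    exact (cfc_inv (fun x => 1 - fs x * ft x) T
      (fun x _ => (hw_pos x).ne')
      (continuousOn_const.sub (hfsc.mul hftc).continuousOn) hTsa).symm
  -- adjoint A ∘L A
  have hcscs : cs ∘L cs = cfc (fun x => fs x * fs x) T := by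
    rw [← mul_def, hcsdef, ← cfc_mul fs fs T hfsc.continuousOn hfsc.continuousOn]
  have hAA : adjoint A ∘L A = cfc (fun x => fs x * fs x) T := by
    rw [hA', hAdef, neg_comp, comp_neg, neg_neg, comp_assoc, habs_s, hcscs]
  have hOneSubAA : 1 - adjoint A ∘L A = cfc (fun x => 1 - fs x * fs x) T := by
    have he : cfc (fun x => 1 - fs x * fs x) T
        = 1 - cfc (fun x => fs x * fs x) T := by
      rw [cfc_sub (fun _ => (1:ℝ)) (fun x => fs x * fs x) T continuousOn_const
        (hfsc.mul hfsc).continuousOn, cfc_const 1 T hTsa, map_one]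
    rw [hAA, he]
  have hsq_pos : ∀ x : ℝ, 0 < 1 - fs x * fs x := fun x =>
    one_sub_tanh_mul_tanh_pos (s * x) (s * x)
  have hSqrt : opSqrt (1 - adjoint A ∘L A)
      = cfc (fun x => Real.sqrt (1 - fs x * fs x)) T := by
    rw [hOneSubAA]
    unfold opSqrt
    exact (cfc_comp' Real.sqrt (fun x => 1 - fs x * fs x) T
      Real.continuous_sqrt.continuousOn
      (continuousOn_const.sub (hfsc.mul hfsc).continuousOn) hTsa).symm
  -- A + X
  have hcd : cfc (fun x => ft x - fs x) T = ct - cs :=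
    cfc_sub ft fs T hftc.continuousOn hfsc.continuousOn
  have hV : A + X = J ∘L cfc (fun x => ft x - fs x) T := by
    rw [hcd, comp_sub, hAdef, hXdef]
    abel
  -- A ∘L adjoint A
  have hW : A ∘L adjoint A = J ∘L (cfc (fun x => fs x * fs x) T ∘L adjoint J) := by
    rw [hA', hAdef, neg_comp, comp_neg, neg_neg, ← hcscs]
    calc (J ∘L cs) ∘L (cs ∘L adjoint J) = J ∘L (cs ∘L (cs ∘L adjoint J)) := by
          rw [comp_assoc]
    _ = J ∘L ((cs ∘L cs) ∘L adjoint J) := by rw [comp_assoc]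
  -- norm bound on A
  have hths : 0 ≤ Real.tanh |s| := tanh_nonneg (abs_nonneg s)
  have hnormcs : ‖cs‖ ≤ Real.tanh |s| := by
    refine norm_cfc_le hths fun x hx => ?_
    rw [Real.norm_eq_abs]
    exact abs_tanh_mul_le s x (hspecT01 hx)
  have hnormA : ‖A‖ ≤ Real.tanh |s| := by
    rw [hAdef, norm_neg, norm_J_comp cs J hcs_sa habs_s]
    exact hnormcs
  set ε : ℝ := 1 - Real.tanh |s| * Real.tanh |s| with hεdef
  have hε : 0 < ε := one_sub_tanh_mul_tanh_pos |s| |s|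
  have hWnorm : ‖A ∘L adjoint A‖ ≤ Real.tanh |s| * Real.tanh |s| := by
    have h1 : A ∘L adjoint A = adjoint (adjoint A) ∘L adjoint A := by
      rw [adjoint_adjoint]
    rw [h1, norm_adjoint_comp_self]
    have h2 : ‖adjoint A‖ = ‖A‖ := by
      exact LinearIsometryEquiv.norm_map (adjoint (𝕜 := ℂ) (E := K) (F := H) :
        (K →L[ℂ] H) ≃ₗᵢ⋆[ℂ] (H →L[ℂ] K)) A
    rw [h2]
    exact mul_le_mul hnormA hnormA (norm_nonneg A) hths
  have hSspec : ∀ y ∈ spectrum ℝ ((1 : H →L[ℂ] H) - A ∘L adjoint A), ε ≤ y := by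
    intro y hy
    have h0 : (1 : H →L[ℂ] H) - A ∘L adjoint A
        = algebraMap ℝ (H →L[ℂ] H) 1 - A ∘L adjoint A := by rw [map_one]
    rw [h0, ← spectrum.singleton_sub_eq] at hy
    obtain ⟨o, ho, w, hw, rfl⟩ := Set.mem_sub.mp hy
    rw [Set.mem_singleton_iff] at ho
    subst ho
    have h1 := spectrum.norm_le_norm_of_mem hw
    rw [Real.norm_eq_abs] at h1
    have h2 : w ≤ Real.tanh |s| * Real.tanh |s| :=
      (le_abs_self w).trans (h1.trans hWnorm)
    rw [hεdef]
    linarith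
  have hSsa : IsSelfAdjoint ((1 : H →L[ℂ] H) - A ∘L adjoint A) := by
    have h1 : IsSelfAdjoint (A ∘L adjoint A) := by
      rw [IsSelfAdjoint, star_eq_adjoint, adjoint_comp, adjoint_adjoint]
    exact (IsSelfAdjoint.one (H →L[ℂ] H)).sub h1
  -- step 10 : intertwining
  set g : ℝ → ℝ := fun y => (Real.sqrt (max y ε))⁻¹ with hgdef
  have hgc : Continuous g := by
    refine (Real.continuous_sqrt.comp (continuous_id.max continuous_const)).inv₀ ?_
    intro y
    exact (Real.sqrt_pos.mpr (lt_max_of_lt_right hε)).ne'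
  have hopinv : opInvSqrt (1 - A ∘L adjoint A) = cfc g (1 - A ∘L adjoint A) := by
    unfold opInvSqrt
    refine cfc_congr fun y hy => ?_
    rw [hgdef]
    simp only []
    rw [max_eq_left (hSspec y hy)]
  have habs_d : adjoint J ∘L (J ∘L cfc (fun x => ft x - fs x) T)
      = cfc (fun x => ft x - fs x) T := by
    rw [hcd, comp_sub, comp_sub, habs_t, habs_s]
  have hSV : ((1 : H →L[ℂ] H) - A ∘L adjoint A) ∘L (A + X)
      = (A + X) ∘L cfc (fun x => 1 - fs x * fs x) T := by
    rw [hV, hW]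
    have hL1 : (J ∘L (cfc (fun x => fs x * fs x) T ∘L adjoint J))
          ∘L (J ∘L cfc (fun x => ft x - fs x) T)
        = J ∘L (cfc (fun x => fs x * fs x) T ∘L cfc (fun x => ft x - fs x) T) := by
      calc (J ∘L (cfc (fun x => fs x * fs x) T ∘L adjoint J))
            ∘L (J ∘L cfc (fun x => ft x - fs x) T)
          = J ∘L (cfc (fun x => fs x * fs x) T
              ∘L (adjoint J ∘L (J ∘L cfc (fun x => ft x - fs x) T))) := by
            rw [comp_assoc, comp_assoc]
      _ = _ := by rw [habs_d]
    rw [sub_comp, one_def, id_comp, hL1, comp_assoc]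
    rw [← comp_sub]
    congr 1
    have hm1 : cfc (fun x => fs x * fs x) T ∘L cfc (fun x => ft x - fs x) T
        = cfc (fun x => (fs x * fs x) * (ft x - fs x)) T := by
      rw [← mul_def, ← cfc_mul (fun x => fs x * fs x) (fun x => ft x - fs x) T
        (hfsc.mul hfsc).continuousOn (hftc.sub hfsc).continuousOn]
    have hm2 : cfc (fun x => ft x - fs x) T ∘L cfc (fun x => 1 - fs x * fs x) T
        = cfc (fun x => (ft x - fs x) * (1 - fs x * fs x)) T := by
      rw [← mul_def, ← cfc_mul (fun x => ft x - fs x) (fun x => 1 - fs x * fs x) T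
        (hftc.sub hfsc).continuousOn (continuousOn_const.sub (hfsc.mul hfsc).continuousOn)]
    rw [hm1, hm2]
    rw [← cfc_sub (fun x => ft x - fs x) (fun x => (fs x * fs x) * (ft x - fs x)) T
      (hftc.sub hfsc).continuousOn ((hfsc.mul hfsc).mul (hftc.sub hfsc)).continuousOn]
    exact cfc_congr fun x _ => by ring
  have hinter := cfc_intertwine ((1 : H →L[ℂ] H) - A ∘L adjoint A)
    (cfc (fun x => 1 - fs x * fs x) T) (A + X) hSsa
    (cfc_predicate (fun x => 1 - fs x * fs x) T) hSV hgc
  have hcompg : cfc g (cfc (fun x => 1 - fs x * fs x) T)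
      = cfc (fun x => (Real.sqrt (1 - fs x * fs x))⁻¹) T := by
    rw [← cfc_comp' g (fun x => 1 - fs x * fs x) T hgc.continuousOn
      (continuousOn_const.sub (hfsc.mul hfsc).continuousOn) hTsa]
    refine cfc_congr fun x hx => ?_
    have h3 : fs x * fs x ≤ Real.tanh |s| * Real.tanh |s| := by
      have h2 := abs_tanh_mul_le s x (hspecT01 hx)
      have h5 := abs_mul_abs_self (fs x)
      have h6 : |fs x| = |Real.tanh (s * x)| := by rw [hfsdef]
      nlinarith [abs_nonneg (fs x)]
    have h1 : ε ≤ 1 - fs x * fs x := by rw [hεdef]; linarith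
    show g (1 - fs x * fs x) = (Real.sqrt (1 - fs x * fs x))⁻¹
    rw [hgdef]
    simp only []
    rw [max_eq_left h1]
  have hstep10 : opInvSqrt (1 - A ∘L adjoint A) ∘L (A + X)
      = (A + X) ∘L cfc (fun x => (Real.sqrt (1 - fs x * fs x))⁻¹) T := by
    rw [hopinv, hinter, hcompg]
  -- folding the product of cfc's
  have c1 : Continuous (fun x => (Real.sqrt (1 - fs x * fs x))⁻¹) :=
    (Real.continuous_sqrt.comp (continuous_const.sub (hfsc.mul hfsc))).inv₀
      fun x => (Real.sqrt_pos.mpr (hsq_pos x)).ne'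
  have c2 : Continuous (fun x => (1 - fs x * ft x)⁻¹) :=
    (continuous_const.sub (hfsc.mul hftc)).inv₀ fun x => (hw_pos x).ne'
  have c3 : Continuous (fun x => Real.sqrt (1 - fs x * fs x)) :=
    Real.continuous_sqrt.comp (continuous_const.sub (hfsc.mul hfsc))
  have hfold : cfc (fun x => ft x - fs x) T
      ∘L (cfc (fun x => (Real.sqrt (1 - fs x * fs x))⁻¹) T
        ∘L (cfc (fun x => (1 - fs x * ft x)⁻¹) T
          ∘L cfc (fun x => Real.sqrt (1 - fs x * fs x)) T))
      = cfc fd T := by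
    rw [← mul_def, ← mul_def, ← mul_def]
    rw [← cfc_mul (fun x => (1 - fs x * ft x)⁻¹) (fun x => Real.sqrt (1 - fs x * fs x)) T
      c2.continuousOn c3.continuousOn]
    rw [← cfc_mul (fun x => (Real.sqrt (1 - fs x * fs x))⁻¹)
      (fun x => (1 - fs x * ft x)⁻¹ * Real.sqrt (1 - fs x * fs x)) T
      c1.continuousOn (c2.mul c3).continuousOn]
    rw [← cfc_mul (fun x => ft x - fs x)
      (fun x => (Real.sqrt (1 - fs x * fs x))⁻¹
        * ((1 - fs x * ft x)⁻¹ * Real.sqrt (1 - fs x * fs x))) T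
      (hftc.sub hfsc).continuousOn (c1.mul (c2.mul c3)).continuousOn]
    refine cfc_congr fun x _ => ?_
    have h1 : Real.sqrt (1 - fs x * fs x) ≠ 0 := (Real.sqrt_pos.mpr (hsq_pos x)).ne'
    have h2 : 1 - fs x * ft x ≠ 0 := (hw_pos x).ne'
    simp only [hfsdef, hftdef, hfddef] at h1 h2 ⊢
    have h4 : (t - s) * x = t * x - s * x := by ring
    have h3 : 1 - Real.tanh (t * x) * Real.tanh (s * x) ≠ 0 :=
      (one_sub_tanh_mul_tanh_pos (t * x) (s * x)).ne'
    rw [h4, tanh_sub (t * x) (s * x)]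
    have h5 : (Real.sqrt (1 - Real.tanh (s*x) * Real.tanh (s*x)))⁻¹
        * ((1 - Real.tanh (s*x) * Real.tanh (t*x))⁻¹
          * Real.sqrt (1 - Real.tanh (s*x) * Real.tanh (s*x)))
        = (1 - Real.tanh (s*x) * Real.tanh (t*x))⁻¹ := by
      calc (Real.sqrt (1 - Real.tanh (s*x) * Real.tanh (s*x)))⁻¹
          * ((1 - Real.tanh (s*x) * Real.tanh (t*x))⁻¹
            * Real.sqrt (1 - Real.tanh (s*x) * Real.tanh (s*x)))
          = (1 - Real.tanh (s*x) * Real.tanh (t*x))⁻¹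
            * ((Real.sqrt (1 - Real.tanh (s*x) * Real.tanh (s*x)))⁻¹
              * Real.sqrt (1 - Real.tanh (s*x) * Real.tanh (s*x))) := by ring
      _ = (1 - Real.tanh (s*x) * Real.tanh (t*x))⁻¹ := by
          rw [inv_mul_cancel₀ h1, mul_one]
    rw [h5]
    have h6 : 1 - Real.tanh (s*x) * Real.tanh (t*x)
        = 1 - Real.tanh (t*x) * Real.tanh (s*x) := by ring
    rw [h6, ← div_eq_mul_inv]
  have hmain : mobius A X = J ∘L cfc fd T := by
    unfold mobius
    rw [hRinv, hSqrt]
    calc opInvSqrt (1 - A ∘L adjoint A) ∘L ((A + X) ∘L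
          (cfc (fun x => (1 - fs x * ft x)⁻¹) T
            ∘L cfc (fun x => Real.sqrt (1 - fs x * fs x)) T))
        = (opInvSqrt (1 - A ∘L adjoint A) ∘L (A + X)) ∘L
          (cfc (fun x => (1 - fs x * ft x)⁻¹) T
            ∘L cfc (fun x => Real.sqrt (1 - fs x * fs x)) T) := by
          rw [comp_assoc]
    _ = ((A + X) ∘L cfc (fun x => (Real.sqrt (1 - fs x * fs x))⁻¹) T) ∘L
          (cfc (fun x => (1 - fs x * ft x)⁻¹) T
            ∘L cfc (fun x => Real.sqrt (1 - fs x * fs x)) T) := by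
          rw [hstep10]
    _ = J ∘L (cfc (fun x => ft x - fs x) T
          ∘L (cfc (fun x => (Real.sqrt (1 - fs x * fs x))⁻¹) T
            ∘L (cfc (fun x => (1 - fs x * ft x)⁻¹) T
              ∘L cfc (fun x => Real.sqrt (1 - fs x * fs x)) T))) := by
          rw [hV, comp_assoc, comp_assoc]
    _ = J ∘L cfc fd T := by rw [hfold]
  have habs_fd : adjoint J ∘L (J ∘L cfc fd T) = cfc fd T := by
    rw [hfddef]
    exact absorb T J hTsa hJ1 (t - s)
  have hnormfd : ‖cfc fd T‖ = Real.tanh |t - s| := by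
    have hg1 := IsGreatest.norm_cfc fd T hfdc.continuousOn hTsa
    have hg2 : IsGreatest ((fun x => ‖fd x‖) '' spectrum ℝ T) (Real.tanh |t - s|) := by
      constructor
      · refine ⟨1, h1T, ?_⟩
        simp only [hfddef]
        rw [Real.norm_eq_abs, mul_one, abs_tanh_eq]
      · rintro - ⟨x, hx, rfl⟩
        simp only [hfddef]
        rw [Real.norm_eq_abs]
        exact abs_tanh_mul_le (t - s) x (hspecT01 hx)
    exact hg1.unique hg2
  refine ⟨hmain, ?_⟩
  rw [hmain, norm_J_comp (cfc fd T) J (cfc_predicate fd T) habs_fd, hnormfd]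
  unfold artanh
  exact artanh_tanh |t - s|
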